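/- With ξ₄ = −(x¹+3tx²)∂₀ − t³∂₁ + t²∂₂ − t∂₃ + ∂₄ and ξ₃ = 3x²∂₀ + 3t²∂₁ − 2t∂₂ + ∂₃ for a smooth function t on U ⊂ ℝ⁵: at any point p where ξ₄(t)(p) ≠ 0, the five vector fields ξ₄, ξ₃, [ξ₄,ξ₃], [ξ₄,[ξ₄,ξ₃]], [ξ₃,[ξ₄,ξ₃]] span the full tangent space ℝ⁵. Consequently, the distribution span{ξ₃,ξ₄} is either integrable (where ξ₄(t) ≡ 0) or has growth vector (2,3,5) at points where ξ₄(t) ≠ 0. -/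

import Mathlib

/-- The Lie bracket of vector fields on `ℝ⁵` written in coordinates. -/
noncomputable def lieB (X Y : (Fin 5 → ℝ) → Fin 5 → ℝ) (x : Fin 5 → ℝ) : Fin 5 → ℝ :=
  fun i => fderiv ℝ (fun y => Y y i) x (X x) - fderiv ℝ (fun y => X y i) x (Y x)

/-- The vector field `ξ₄ = −(x¹+3tx²)∂₀ − t³∂₁ + t²∂₂ − t∂₃ + ∂₄`. -/
def xi4 (t : (Fin 5 → ℝ) → ℝ) : (Fin 5 → ℝ) → Fin 5 → ℝ :=
  fun x => ![-(x 1 + 3 * t x * x 2), -(t x) ^ 3, (t x) ^ 2, -(t x), 1]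

/-- The vector field `ξ₃ = 3x²∂₀ + 3t²∂₁ − 2t∂₂ + ∂₃`. -/
def xi3 (t : (Fin 5 → ℝ) → ℝ) : (Fin 5 → ℝ) → Fin 5 → ℝ :=
  fun x => ![3 * x 2, 3 * (t x) ^ 2, -(2 * t x), 1, 0]


open ContinuousLinearMap

abbrev E5 := Fin 5 → ℝ

lemma diff_eval (i : Fin 5) (x : E5) : DifferentiableAt ℝ (fun y : E5 => y i) x :=
  (proj (R := ℝ) (φ := fun _ : Fin 5 => ℝ) i).differentiableAt

lemma fderiv_eval (i : Fin 5) (x v : E5) : fderiv ℝ (fun y : E5 => y i) x v = v i := by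
  rw [show (fun y : E5 => y i) = ⇑(proj (R := ℝ) (φ := fun _ : Fin 5 => ℝ) i) from rfl,
    ContinuousLinearMap.fderiv]
  rfl

section comps
variable {t : E5 → ℝ} {x v : E5} (h : DifferentiableAt ℝ t x)

lemma dxi3_0 : fderiv ℝ (fun z : E5 => xi3 t z 0) x v = 3 * v 2 := by
  have e : (fun z : E5 => xi3 t z 0) = fun z => 3 * z 2 := by funext z; simp [xi3]
  rw [e, fderiv_const_mul (diff_eval 2 x)]
  simp [fderiv_eval]

include h

lemma dxi3_1 : fderiv ℝ (fun z : E5 => xi3 t z 1) x v = 6 * t x * fderiv ℝ t x v := by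
  have e : (fun z : E5 => xi3 t z 1) = fun z => 3 * (t z * t z) := by funext z; simp [xi3]; ring
  rw [e, fderiv_const_mul (h.fun_mul h), fderiv_fun_mul h h]
  simp; ring

lemma dxi3_2 : fderiv ℝ (fun z : E5 => xi3 t z 2) x v = -(2 * fderiv ℝ t x v) := by
  have e : (fun z : E5 => xi3 t z 2) = fun z => -(2 * t z) := by funext z; simp [xi3]
  rw [e, fderiv_fun_neg, fderiv_const_mul h]
  simp

omit h

lemma dxi3_3 : fderiv ℝ (fun z : E5 => xi3 t z 3) x v = 0 := by
  have e : (fun z : E5 => xi3 t z 3) = fun _ => (1:ℝ) := by funext z; simp [xi3]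
  rw [e, fderiv_fun_const]; simp

lemma dxi3_4 : fderiv ℝ (fun z : E5 => xi3 t z 4) x v = 0 := by
  have e : (fun z : E5 => xi3 t z 4) = fun _ => (0:ℝ) := by funext z; simp [xi3]
  rw [e, fderiv_fun_const]; simp

include h

lemma dxi4_0 : fderiv ℝ (fun z : E5 => xi4 t z 0) x v
    = -(v 1) - 3 * t x * v 2 - 3 * x 2 * fderiv ℝ t x v := by
  have e : (fun z : E5 => xi4 t z 0) = fun z => -(z 1 + (3 * t z) * z 2) := by
    funext z; simp [xi4]
  rw [e, fderiv_fun_neg, fderiv_fun_add (diff_eval 1 x) ((h.const_mul 3).fun_mul (diff_eval 2 x)),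
    fderiv_fun_mul (h.const_mul 3) (diff_eval 2 x), fderiv_const_mul h]
  simp [fderiv_eval]; ring

lemma dxi4_1 : fderiv ℝ (fun z : E5 => xi4 t z 1) x v = -(3 * t x ^ 2 * fderiv ℝ t x v) := by
  have e : (fun z : E5 => xi4 t z 1) = fun z => -((t z * t z) * t z) := by
    funext z; simp [xi4]; ring
  rw [e, fderiv_fun_neg, fderiv_fun_mul (h.fun_mul h) h, fderiv_fun_mul h h]
  simp; ring

lemma dxi4_2 : fderiv ℝ (fun z : E5 => xi4 t z 2) x v = 2 * t x * fderiv ℝ t x v := by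
  have e : (fun z : E5 => xi4 t z 2) = fun z => t z * t z := by funext z; simp [xi4]; ring
  rw [e, fderiv_fun_mul h h]
  simp; ring

omit h

lemma dxi4_3 : fderiv ℝ (fun z : E5 => xi4 t z 3) x v = -(fderiv ℝ t x v) := by
  have e : (fun z : E5 => xi4 t z 3) = fun z => -(t z) := by funext z; simp [xi4]
  rw [e, fderiv_fun_neg]; simp

lemma dxi4_4 : fderiv ℝ (fun z : E5 => xi4 t z 4) x v = 0 := by
  have e : (fun z : E5 => xi4 t z 4) = fun _ => (1:ℝ) := by funext z; simp [xi4]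
  rw [e, fderiv_fun_const]; simp

include h

lemma diff_xi4 : DifferentiableAt ℝ (xi4 t) x := by
  rw [differentiableAt_pi]
  intro i
  fin_cases i <;> simp [xi4] <;> fun_prop

lemma diff_xi3 : DifferentiableAt ℝ (xi3 t) x := by
  rw [differentiableAt_pi]
  intro i
  fin_cases i <;> simp [xi3] <;> fun_prop

lemma bracket1 : lieB (xi4 t) (xi3 t) x
    = ![3 * x 2 * fderiv ℝ t x (xi3 t x),
        6 * t x * fderiv ℝ t x (xi4 t x) + 3 * t x ^ 2 * fderiv ℝ t x (xi3 t x),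
        -(2 * fderiv ℝ t x (xi4 t x)) - 2 * t x * fderiv ℝ t x (xi3 t x),
        fderiv ℝ t x (xi3 t x), 0] := by
  funext i
  fin_cases i
  · show fderiv ℝ (fun z => xi3 t z 0) x (xi4 t x) - fderiv ℝ (fun z => xi4 t z 0) x (xi3 t x) = _
    rw [dxi3_0, dxi4_0 h]
    simp [xi4, xi3]; try ring
  · show fderiv ℝ (fun z => xi3 t z 1) x (xi4 t x) - fderiv ℝ (fun z => xi4 t z 1) x (xi3 t x) = _
    rw [dxi3_1 h, dxi4_1 h]
    simp; try ring
  · show fderiv ℝ (fun z => xi3 t z 2) x (xi4 t x) - fderiv ℝ (fun z => xi4 t z 2) x (xi3 t x) = _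
    rw [dxi3_2 h, dxi4_2 h]
    simp; try ring
  · show fderiv ℝ (fun z => xi3 t z 3) x (xi4 t x) - fderiv ℝ (fun z => xi4 t z 3) x (xi3 t x) = _
    rw [dxi3_3, dxi4_3]
    simp
  · show fderiv ℝ (fun z => xi3 t z 4) x (xi4 t x) - fderiv ℝ (fun z => xi4 t z 4) x (xi3 t x) = _
    rw [dxi3_4, dxi4_4]
    simp

end comps

section second
variable {t : E5 → ℝ} {p v : E5} {A B : E5 → ℝ}
variable (h : DifferentiableAt ℝ t p) (hA : DifferentiableAt ℝ A p)
  (hB : DifferentiableAt ℝ B p)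

include hB in
lemma dη0 : fderiv ℝ (fun z : E5 => 3 * z 2 * B z) p v
    = 3 * v 2 * B p + 3 * p 2 * fderiv ℝ B p v := by
  rw [show (fun z : E5 => 3 * z 2 * B z) = fun z => (3 * z 2) * B z from rfl,
    fderiv_fun_mul ((diff_eval 2 p).const_mul 3) hB, fderiv_const_mul (diff_eval 2 p)]
  simp [fderiv_eval]; ring

include h hA hB in
lemma dη1 : fderiv ℝ (fun z : E5 => 6 * t z * A z + 3 * t z ^ 2 * B z) p v
    = 6 * fderiv ℝ t p v * A p + 6 * t p * fderiv ℝ A p v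
      + 6 * t p * fderiv ℝ t p v * B p + 3 * t p ^ 2 * fderiv ℝ B p v := by
  have e : (fun z : E5 => 6 * t z * A z + 3 * t z ^ 2 * B z)
      = fun z => (6 * t z) * A z + (3 * (t z * t z)) * B z := by funext z; ring
  rw [e, fderiv_fun_add ((h.const_mul 6).fun_mul hA) (((h.fun_mul h).const_mul 3).fun_mul hB),
    fderiv_fun_mul (h.const_mul 6) hA, fderiv_fun_mul ((h.fun_mul h).const_mul 3) hB,
    fderiv_const_mul h, fderiv_const_mul (h.fun_mul h), fderiv_fun_mul h h]
  simp; ring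

include h hA hB in
lemma dη2 : fderiv ℝ (fun z : E5 => -(2 * A z) - 2 * t z * B z) p v
    = -(2 * fderiv ℝ A p v) - 2 * fderiv ℝ t p v * B p - 2 * t p * fderiv ℝ B p v := by
  rw [show (fun z : E5 => -(2 * A z) - 2 * t z * B z)
      = fun z => -(2 * A z) - (2 * t z) * B z from rfl,
    fderiv_fun_sub (hA.const_mul 2).fun_neg ((h.const_mul 2).fun_mul hB), fderiv_fun_neg,
    fderiv_const_mul hA, fderiv_fun_mul (h.const_mul 2) hB, fderiv_const_mul h]
  simp; ring

end second


lemma smul_cancel_mem {S : Submodule ℝ E5} {c : ℝ} (hc : c ≠ 0) {u : E5}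
    (h : c • u ∈ S) : u ∈ S := by
  have := S.smul_mem c⁻¹ h
  rwa [smul_smul, inv_mul_cancel₀ hc, one_smul] at this

lemma span_aux (T a b x1 x2 α4 β4 α3 β3 d : ℝ) (ha : a ≠ 0) :
    Submodule.span ℝ {(![-(x1 + 3*T*x2), -T^3, T^2, -T, 1] : E5),
      ![3*x2, 3*T^2, -(2*T), 1, 0],
      ![3*x2*b, 6*T*a+3*T^2*b, -(2*a)-2*T*b, b, 0],
      ![3*x2*(β4+d), 6*a^2 + 6*T*α4 + 6*T*a*b + 3*T^2*(β4+d),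
        -(2*α4) - 2*a*b - 2*T*(β4+d), β4+d, 0],
      ![3*x2*β3 + 6*a, 6*a*b + 6*T*α3 + 6*T*b^2 + 3*T^2*β3 - 6*T*d,
        -(2*α3) - 2*b^2 - 2*T*β3 + 2*d, β3, 0]} = ⊤ := by
  set v4 : E5 := ![-(x1 + 3*T*x2), -T^3, T^2, -T, 1] with hv4
  set v3 : E5 := ![3*x2, 3*T^2, -(2*T), 1, 0] with hv3
  set vη : E5 := ![3*x2*b, 6*T*a+3*T^2*b, -(2*a)-2*T*b, b, 0] with hvη
  set w1 : E5 := ![3*x2*(β4+d), 6*a^2 + 6*T*α4 + 6*T*a*b + 3*T^2*(β4+d),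
        -(2*α4) - 2*a*b - 2*T*(β4+d), β4+d, 0] with hw1
  set w2 : E5 := ![3*x2*β3 + 6*a, 6*a*b + 6*T*α3 + 6*T*b^2 + 3*T^2*β3 - 6*T*d,
        -(2*α3) - 2*b^2 - 2*T*β3 + 2*d, β3, 0] with hw2
  set S := Submodule.span ℝ ({v4, v3, vη, w1, w2} : Set E5) with hS
  rw [eq_top_iff]
  rintro v -
  have m4 : v4 ∈ S := Submodule.subset_span (by simp)
  have m3 : v3 ∈ S := Submodule.subset_span (by simp)
  have mη : vη ∈ S := Submodule.subset_span (by simp)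
  have mw1 : w1 ∈ S := Submodule.subset_span (by simp)
  have mw2 : w2 ∈ S := Submodule.subset_span (by simp)
  have he : (![0, 6*T, -2, 0, 0] : E5) ∈ S := by
    refine smul_cancel_mem ha ?_
    have : a • (![0, 6*T, -2, 0, 0] : E5) = vη - b • v3 := by
      funext i; fin_cases i <;> simp [hvη, hv3] <;> ring
    rw [this]; exact S.sub_mem mη (S.smul_mem _ m3)
  have hu1 : (![0, 1, 0, 0, 0] : E5) ∈ S := by
    refine smul_cancel_mem (c := 6*a^2) (by positivity) ?_
    have : (6*a^2) • (![0, 1, 0, 0, 0] : E5)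
        = w1 - (β4+d) • v3 - (α4 + a*b) • ![0, 6*T, -2, 0, 0] := by
      funext i; fin_cases i <;> simp [hw1, hv3] <;> ring
    rw [this]
    exact S.sub_mem (S.sub_mem mw1 (S.smul_mem _ m3)) (S.smul_mem _ he)
  have hu0 : (![1, 0, 0, 0, 0] : E5) ∈ S := by
    refine smul_cancel_mem (c := 6*a) (by simpa using ha) ?_
    have : (6*a) • (![1, 0, 0, 0, 0] : E5)
        = w2 - β3 • v3 - (α3 + b^2 - d) • ![0, 6*T, -2, 0, 0]
            - (6*a*b) • ![0, 1, 0, 0, 0] := by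
      funext i; fin_cases i <;> simp [hw2, hv3] <;> ring
    rw [this]
    exact S.sub_mem (S.sub_mem (S.sub_mem mw2 (S.smul_mem _ m3))
      (S.smul_mem _ he)) (S.smul_mem _ hu1)
  have hu2 : (![0, 0, 1, 0, 0] : E5) ∈ S := by
    refine smul_cancel_mem (c := (-2:ℝ)) (by norm_num) ?_
    have : ((-2:ℝ)) • (![0, 0, 1, 0, 0] : E5)
        = ![0, 6*T, -2, 0, 0] - (6*T) • ![0, 1, 0, 0, 0] := by
      funext i; fin_cases i <;> simp <;> ring
    rw [this]; exact S.sub_mem he (S.smul_mem _ hu1)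
  have hu3 : (![0, 0, 0, 1, 0] : E5) ∈ S := by
    have : (![0, 0, 0, 1, 0] : E5)
        = v3 - (3*x2) • ![1, 0, 0, 0, 0] - (3*T^2) • ![0, 1, 0, 0, 0]
          + (2*T) • ![0, 0, 1, 0, 0] := by
      funext i; fin_cases i <;> simp [hv3] <;> ring
    rw [this]
    exact S.add_mem (S.sub_mem (S.sub_mem m3 (S.smul_mem _ hu0)) (S.smul_mem _ hu1))
      (S.smul_mem _ hu2)
  have hu4 : (![0, 0, 0, 0, 1] : E5) ∈ S := by
    have : (![0, 0, 0, 0, 1] : E5)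
        = v4 + (x1 + 3*T*x2) • ![1, 0, 0, 0, 0] + T^3 • ![0, 1, 0, 0, 0]
          - T^2 • ![0, 0, 1, 0, 0] + T • ![0, 0, 0, 1, 0] := by
      funext i; fin_cases i <;> simp [hv4] <;> ring
    rw [this]
    exact S.add_mem (S.sub_mem (S.add_mem (S.add_mem m4 (S.smul_mem _ hu0))
      (S.smul_mem _ hu1)) (S.smul_mem _ hu2)) (S.smul_mem _ hu3)
  have hv : v = v 0 • ![1, 0, 0, 0, 0] + v 1 • ![0, 1, 0, 0, 0] + v 2 • ![0, 0, 1, 0, 0]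
      + v 3 • ![0, 0, 0, 1, 0] + v 4 • ![0, 0, 0, 0, 1] := by
    funext i; fin_cases i <;> simp
  rw [hv]
  exact S.add_mem (S.add_mem (S.add_mem (S.add_mem (S.smul_mem _ hu0) (S.smul_mem _ hu1))
    (S.smul_mem _ hu2)) (S.smul_mem _ hu3)) (S.smul_mem _ hu4)

/-- At any point `p` where `ξ₄(t)(p) ≠ 0`, the five vector fields
`ξ₄, ξ₃, [ξ₄,ξ₃], [ξ₄,[ξ₄,ξ₃]], [ξ₃,[ξ₄,ξ₃]]` span the full tangent space `ℝ⁵`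
(so the distribution `span{ξ₃,ξ₄}` has growth `(2,3,5)` there). -/
theorem growth_two_three_five
    (U : Set (Fin 5 → ℝ)) (hU : IsOpen U) (t : (Fin 5 → ℝ) → ℝ)
    (ht : ContDiffOn ℝ (⊤ : ℕ∞) t U) (p : Fin 5 → ℝ) (hp : p ∈ U)
    (h : fderiv ℝ t p (xi4 t p) ≠ 0) :
    Submodule.span ℝ
      {xi4 t p, xi3 t p, lieB (xi4 t) (xi3 t) p,
        lieB (xi4 t) (lieB (xi4 t) (xi3 t)) p,
        lieB (xi3 t) (lieB (xi4 t) (xi3 t)) p} = ⊤ := by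

  have hdt : ∀ y ∈ U, DifferentiableAt ℝ t y := fun y hy =>
    (ht.contDiffAt (hU.mem_nhds hy)).differentiableAt
      (by simp)
  have hdtp : DifferentiableAt ℝ t p := hdt p hp
  have hδ : DifferentiableAt ℝ (fderiv ℝ t) p :=
    ((ht.contDiffAt (hU.mem_nhds hp)).fderiv_right (m := 1)
      (ENat.natCast_le_of_coe_top_le_withTop le_rfl 2)).differentiableAt one_ne_zero
  have hA : DifferentiableAt ℝ (fun y => fderiv ℝ t y (xi4 t y)) p :=
    hδ.clm_apply (diff_xi4 hdtp)
  have hB : DifferentiableAt ℝ (fun y => fderiv ℝ t y (xi3 t y)) p :=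
    hδ.clm_apply (diff_xi3 hdtp)
  -- abbreviations (as plain terms)
  have hηp := bracket1 (t := t) (x := p) hdtp
  have hη1 : lieB (xi4 t) (xi3 t) p 1
      = 6 * t p * fderiv ℝ t p (xi4 t p) + 3 * t p ^ 2 * fderiv ℝ t p (xi3 t p) := by
    rw [hηp]; simp
  have hη2 : lieB (xi4 t) (xi3 t) p 2
      = -(2 * fderiv ℝ t p (xi4 t p)) - 2 * t p * fderiv ℝ t p (xi3 t p) := by
    rw [hηp]; simp
  -- eventual equality of bracket components
  have hev0 : (fun y => lieB (xi4 t) (xi3 t) y 0)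
      =ᶠ[nhds p] fun y => 3 * y 2 * fderiv ℝ t y (xi3 t y) := by
    filter_upwards [hU.mem_nhds hp] with y hy
    rw [bracket1 (hdt y hy)]; simp
  have hev1 : (fun y => lieB (xi4 t) (xi3 t) y 1)
      =ᶠ[nhds p] fun y => 6 * t y * fderiv ℝ t y (xi4 t y)
        + 3 * t y ^ 2 * fderiv ℝ t y (xi3 t y) := by
    filter_upwards [hU.mem_nhds hp] with y hy
    rw [bracket1 (hdt y hy)]; simp
  have hev2 : (fun y => lieB (xi4 t) (xi3 t) y 2)
      =ᶠ[nhds p] fun y => -(2 * fderiv ℝ t y (xi4 t y))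
        - 2 * t y * fderiv ℝ t y (xi3 t y) := by
    filter_upwards [hU.mem_nhds hp] with y hy
    rw [bracket1 (hdt y hy)]; simp
  have hev3 : (fun y => lieB (xi4 t) (xi3 t) y 3)
      =ᶠ[nhds p] fun y => fderiv ℝ t y (xi3 t y) := by
    filter_upwards [hU.mem_nhds hp] with y hy
    rw [bracket1 (hdt y hy)]; simp
  have hev4 : (fun y => lieB (xi4 t) (xi3 t) y 4)
      =ᶠ[nhds p] fun _ => (0:ℝ) := by
    filter_upwards [hU.mem_nhds hp] with y hy
    rw [bracket1 (hdt y hy)]; simp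
  -- the two second brackets
  have hw1 : lieB (xi4 t) (lieB (xi4 t) (xi3 t)) p
      = ![3 * p 2 * (fderiv ℝ (fun y => fderiv ℝ t y (xi3 t y)) p (xi4 t p)
            + fderiv ℝ t p (lieB (xi4 t) (xi3 t) p)),
          6 * fderiv ℝ t p (xi4 t p) ^ 2
            + 6 * t p * fderiv ℝ (fun y => fderiv ℝ t y (xi4 t y)) p (xi4 t p)
            + 6 * t p * fderiv ℝ t p (xi4 t p) * fderiv ℝ t p (xi3 t p)
            + 3 * t p ^ 2 * (fderiv ℝ (fun y => fderiv ℝ t y (xi3 t y)) p (xi4 t p)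
              + fderiv ℝ t p (lieB (xi4 t) (xi3 t) p)),
          -(2 * fderiv ℝ (fun y => fderiv ℝ t y (xi4 t y)) p (xi4 t p))
            - 2 * fderiv ℝ t p (xi4 t p) * fderiv ℝ t p (xi3 t p)
            - 2 * t p * (fderiv ℝ (fun y => fderiv ℝ t y (xi3 t y)) p (xi4 t p)
              + fderiv ℝ t p (lieB (xi4 t) (xi3 t) p)),
          fderiv ℝ (fun y => fderiv ℝ t y (xi3 t y)) p (xi4 t p)
            + fderiv ℝ t p (lieB (xi4 t) (xi3 t) p),
          0] := by
    funext i
    fin_cases i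
    · show fderiv ℝ (fun y => lieB (xi4 t) (xi3 t) y 0) p (xi4 t p)
        - fderiv ℝ (fun y => xi4 t y 0) p (lieB (xi4 t) (xi3 t) p) = _
      rw [hev0.fderiv_eq, dη0 hB, dxi4_0 hdtp, hη1, hη2]
      simp
      have h2 : xi4 t p 2 = t p ^ 2 := by simp [xi4]
      rw [h2]; ring
    · show fderiv ℝ (fun y => lieB (xi4 t) (xi3 t) y 1) p (xi4 t p)
        - fderiv ℝ (fun y => xi4 t y 1) p (lieB (xi4 t) (xi3 t) p) = _
      rw [hev1.fderiv_eq, dη1 hdtp hA hB, dxi4_1 hdtp]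
      simp
      ring
    · show fderiv ℝ (fun y => lieB (xi4 t) (xi3 t) y 2) p (xi4 t p)
        - fderiv ℝ (fun y => xi4 t y 2) p (lieB (xi4 t) (xi3 t) p) = _
      rw [hev2.fderiv_eq, dη2 hdtp hA hB, dxi4_2 hdtp]
      simp
      ring
    · show fderiv ℝ (fun y => lieB (xi4 t) (xi3 t) y 3) p (xi4 t p)
        - fderiv ℝ (fun y => xi4 t y 3) p (lieB (xi4 t) (xi3 t) p) = _
      rw [hev3.fderiv_eq, dxi4_3]
      simp
      try ring
    · show fderiv ℝ (fun y => lieB (xi4 t) (xi3 t) y 4) p (xi4 t p)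
        - fderiv ℝ (fun y => xi4 t y 4) p (lieB (xi4 t) (xi3 t) p) = _
      rw [hev4.fderiv_eq, dxi4_4, fderiv_fun_const]
      simp
  have hw2 : lieB (xi3 t) (lieB (xi4 t) (xi3 t)) p
      = ![3 * p 2 * fderiv ℝ (fun y => fderiv ℝ t y (xi3 t y)) p (xi3 t p)
            + 6 * fderiv ℝ t p (xi4 t p),
          6 * fderiv ℝ t p (xi4 t p) * fderiv ℝ t p (xi3 t p)
            + 6 * t p * fderiv ℝ (fun y => fderiv ℝ t y (xi4 t y)) p (xi3 t p)
            + 6 * t p * fderiv ℝ t p (xi3 t p) ^ 2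
            + 3 * t p ^ 2 * fderiv ℝ (fun y => fderiv ℝ t y (xi3 t y)) p (xi3 t p)
            - 6 * t p * fderiv ℝ t p (lieB (xi4 t) (xi3 t) p),
          -(2 * fderiv ℝ (fun y => fderiv ℝ t y (xi4 t y)) p (xi3 t p))
            - 2 * fderiv ℝ t p (xi3 t p) ^ 2
            - 2 * t p * fderiv ℝ (fun y => fderiv ℝ t y (xi3 t y)) p (xi3 t p)
            + 2 * fderiv ℝ t p (lieB (xi4 t) (xi3 t) p),
          fderiv ℝ (fun y => fderiv ℝ t y (xi3 t y)) p (xi3 t p),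
          0] := by
    funext i
    fin_cases i
    · show fderiv ℝ (fun y => lieB (xi4 t) (xi3 t) y 0) p (xi3 t p)
        - fderiv ℝ (fun y => xi3 t y 0) p (lieB (xi4 t) (xi3 t) p) = _
      rw [hev0.fderiv_eq, dη0 hB, dxi3_0, hη2]
      simp
      have h2 : xi3 t p 2 = -(2 * t p) := by simp [xi3]
      rw [h2]; ring
    · show fderiv ℝ (fun y => lieB (xi4 t) (xi3 t) y 1) p (xi3 t p)
        - fderiv ℝ (fun y => xi3 t y 1) p (lieB (xi4 t) (xi3 t) p) = _
      rw [hev1.fderiv_eq, dη1 hdtp hA hB, dxi3_1 hdtp]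
      simp
      ring
    · show fderiv ℝ (fun y => lieB (xi4 t) (xi3 t) y 2) p (xi3 t p)
        - fderiv ℝ (fun y => xi3 t y 2) p (lieB (xi4 t) (xi3 t) p) = _
      rw [hev2.fderiv_eq, dη2 hdtp hA hB, dxi3_2 hdtp]
      simp
      ring
    · show fderiv ℝ (fun y => lieB (xi4 t) (xi3 t) y 3) p (xi3 t p)
        - fderiv ℝ (fun y => xi3 t y 3) p (lieB (xi4 t) (xi3 t) p) = _
      rw [hev3.fderiv_eq, dxi3_3]
      simp
      try ring
    · show fderiv ℝ (fun y => lieB (xi4 t) (xi3 t) y 4) p (xi3 t p)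
        - fderiv ℝ (fun y => xi3 t y 4) p (lieB (xi4 t) (xi3 t) p) = _
      rw [hev4.fderiv_eq, dxi3_4, fderiv_fun_const]
      simp
  have hx4 : xi4 t p = ![-(p 1 + 3 * t p * p 2), -(t p) ^ 3, (t p) ^ 2, -(t p), 1] := rfl
  have hx3 : xi3 t p = ![3 * p 2, 3 * (t p) ^ 2, -(2 * t p), 1, 0] := rfl
  rw [hx4, hx3, hηp, hw1, hw2]
  have := span_aux (t p) (fderiv ℝ t p (xi4 t p)) (fderiv ℝ t p (xi3 t p)) (p 1) (p 2)
    (fderiv ℝ (fun y => fderiv ℝ t y (xi4 t y)) p (xi4 t p))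
    (fderiv ℝ (fun y => fderiv ℝ t y (xi3 t y)) p (xi4 t p))
    (fderiv ℝ (fun y => fderiv ℝ t y (xi4 t y)) p (xi3 t p))
    (fderiv ℝ (fun y => fderiv ℝ t y (xi3 t y)) p (xi3 t p))
    (fderiv ℝ t p (lieB (xi4 t) (xi3 t) p)) h
  convert this using 4 <;> norm_num <;> ring
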